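/- Let σ ∈ S_n be a cycle of length n and a, c_1, ..., c_n > 0. If the map Θ(X) = diag(a x_{11} + c_1 x_{σ(1)σ(1)}, ..., a x_{nn} + c_n x_{σ(n)σ(n)}) - X is positive on M_n (maps positive semidefinite matrices to positive semidefinite matrices), then a ≥ max(n - 1, n - (c_1···c_n)^(1/n)). -/

import Mathlib

open Finset Matrix
open scoped ComplexOrder

/-- The map `Θ^{(n,σ)}[a; c₁,…,c_n]` on `n × n` complex matrices. -/
def ThetaMap (n : ℕ) (σ : Equiv.Perm (Fin n)) (a : ℝ) (c : Fin n → ℝ)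
    (X : Matrix (Fin n) (Fin n) ℂ) : Matrix (Fin n) (Fin n) ℂ :=
  Matrix.diagonal (fun i => (a : ℂ) * X i i + (c i : ℂ) * X (σ i) (σ i)) - X

lemma exists_cocycle (n : ℕ) (hn : 0 < n) (σ : Equiv.Perm (Fin n)) (hσ : σ.IsCycle)
    (hσn : σ.support.card = n) (u : Fin n → ℝ) (hu : ∀ i, 0 < u i) (hu1 : ∏ i, u i = 1) :
    ∃ s : Fin n → ℝ, (∀ i, 0 < s i) ∧ ∀ i, s (σ i) = u i * s i := by
  have hsupp : σ.support = Finset.univ := by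
    apply Finset.eq_univ_of_card; simpa using hσn
  have hmoves : ∀ i : Fin n, σ i ≠ i := fun i =>
    Equiv.Perm.mem_support.mp (hsupp ▸ Finset.mem_univ i)
  have horder : orderOf σ = n := by rw [hσ.orderOf, hσn]
  have hpow : σ ^ n = 1 := by
    have := pow_orderOf_eq_one σ; rwa [horder] at this
  set i0 : Fin n := ⟨0, hn⟩ with hi0
  have hex : ∀ i : Fin n, ∃ k, k < n ∧ (σ ^ k) i0 = i := by
    intro i
    obtain ⟨k, hk⟩ := hσ.exists_pow_eq (hmoves i0) (hmoves i)
    refine ⟨k % n, Nat.mod_lt _ hn, ?_⟩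
    have h2 : σ ^ k = σ ^ (k % n) := by
      conv_lhs => rw [← Nat.div_add_mod k n]
      rw [pow_add, pow_mul, hpow, one_pow, one_mul]
    rw [← h2, hk]
  have key : ∀ m, m < n → (σ ^ m) i0 = i0 → m = 0 := by
    intro m hm hfix
    have hone : σ ^ m = 1 := by
      apply Equiv.ext
      intro i
      simp only [Equiv.Perm.coe_one, id_eq]
      obtain ⟨k, _, hk⟩ := hex i
      rw [← hk]
      calc (σ ^ m) ((σ ^ k) i0) = (σ ^ k) ((σ ^ m) i0) := by
            rw [← Equiv.Perm.mul_apply, ← Equiv.Perm.mul_apply, pow_mul_comm]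
        _ = (σ ^ k) i0 := by rw [hfix]
    have hdvd := orderOf_dvd_of_pow_eq_one hone
    rw [horder] at hdvd
    exact Nat.eq_zero_of_dvd_of_lt hdvd hm
  have haux : ∀ k k', k ≤ k' → k' < n → (σ ^ k) i0 = (σ ^ k') i0 → k = k' := by
    intro k k' h hk' heq
    have h1 : (σ ^ k) ((σ ^ (k' - k)) i0) = (σ ^ k) i0 := by
      rw [← Equiv.Perm.mul_apply, ← pow_add]
      rw [show k + (k' - k) = k' by omega]
      exact heq.symm
    have h2 := (Equiv.injective _) h1
    have := key (k' - k) (by omega) h2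
    omega
  have huniq : ∀ k k', k < n → k' < n → (σ ^ k) i0 = (σ ^ k') i0 → k = k' := by
    intro k k' hk hk' heq
    rcases le_total k k' with h | h
    · exact haux k k' h hk' heq
    · exact (haux k' k h hk heq.symm).symm
  -- the position function
  have hP : ∀ i : Fin n, ∃ k, k < n ∧ (σ ^ k) i0 = i := hex
  classical
  set cyc : Fin n → ℕ := fun i => Nat.find (hP i) with hcyc
  have hcyc_spec : ∀ i, cyc i < n ∧ (σ ^ (cyc i)) i0 = i := fun i => Nat.find_spec (hP i)
  have hcyc_eq : ∀ k, k < n → cyc ((σ ^ k) i0) = k := by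
    intro k hk
    exact huniq _ _ (hcyc_spec _).1 hk (hcyc_spec _).2
  set g : ℕ → ℝ := fun k => ∏ j ∈ Finset.range k, u ((σ ^ j) i0) with hg
  have hgpos : ∀ k, 0 < g k := fun k => Finset.prod_pos (fun j _ => hu _)
  have hgn : g n = 1 := by
    simp only [hg]
    rw [← hu1]
    apply Finset.prod_nbij (fun j => (σ ^ j) i0)
    · intro j _; exact Finset.mem_univ _
    · intro j hj j' hj' heq
      simp only [Finset.mem_coe, Finset.mem_range] at hj hj'
      exact huniq j j' hj hj' heq
    · intro i _
      obtain ⟨k, hk, hki⟩ := hex i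
      exact ⟨k, by simpa using hk, hki⟩
    · intro j _; rfl
  refine ⟨fun i => g (cyc i), fun i => hgpos _, ?_⟩
  intro i
  obtain ⟨hlt, hki⟩ := hcyc_spec i
  by_cases hcase : cyc i + 1 < n
  · have : σ i = (σ ^ (cyc i + 1)) i0 := by
      rw [pow_succ']
      simp [Equiv.Perm.mul_apply, hki]
    show g (cyc (σ i)) = u i * g (cyc i)
    rw [this, hcyc_eq _ hcase]
    simp only [hg]
    rw [Finset.prod_range_succ]
    rw [hki]
    ring
  · -- cyc i + 1 = n
    have hceq : cyc i + 1 = n := by omega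
    have hσi : σ i = i0 := by
      have : σ i = (σ ^ (cyc i + 1)) i0 := by
        rw [pow_succ']
        simp [Equiv.Perm.mul_apply, hki]
      rw [this, hceq, hpow]; rfl
    show g (cyc (σ i)) = u i * g (cyc i)
    rw [hσi]
    have h0 : cyc i0 = 0 := by
      have := hcyc_eq 0 hn
      simpa using this
    rw [h0]
    have : u i * g (cyc i) = g n := by
      rw [← hceq]; simp only [hg]; rw [Finset.prod_range_succ, hki]; ring
    rw [this, hgn]
    simp [hg]

lemma sum_le_one (n : ℕ) (hn : 0 < n) (σ : Equiv.Perm (Fin n)) (a : ℝ) (c : Fin n → ℝ)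
    (ha0 : 0 < a) (hc : ∀ i, 0 < c i)
    (hpos : ∀ X : Matrix (Fin n) (Fin n) ℂ, X.PosSemidef → (ThetaMap n σ a c X).PosSemidef)
    (s : Fin n → ℝ) (hs : ∀ i, 0 < s i) :
    ∑ i, s i / (a * s i + c i * s (σ i)) ≤ 1 := by
  have : Nonempty (Fin n) := ⟨⟨0, hn⟩⟩
  set t : Fin n → ℝ := fun i => Real.sqrt (s i) with htdef
  have ht : ∀ i, t i * t i = s i := fun i => Real.mul_self_sqrt (hs i).le
  set X : Matrix (Fin n) (Fin n) ℂ := Matrix.of (fun i j => ((t i : ℂ) * (t j : ℂ))) with hXdef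
  have hX : X.PosSemidef := by
    have h := Matrix.posSemidef_conjTranspose_mul_self
      (Matrix.of fun (_ : Fin 1) j => ((t j : ℂ)))
    convert h using 1
    ext i j
    simp [Matrix.mul_apply, Matrix.conjTranspose_apply, hXdef, Complex.conj_ofReal,
      Fin.sum_univ_one]
  set d : Fin n → ℝ := fun i => a * s i + c i * s (σ i) with hddef
  have hd : ∀ i, 0 < d i := fun i => by
    have := hs i; have := hs (σ i); have := hc i
    simp only [hddef]; positivity
  set w : Fin n → ℂ := fun i => ((t i / d i : ℝ) : ℂ) with hwdef
  set S : ℝ := ∑ i, s i / d i with hSdef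
  have hq : ∀ i, (t i : ℂ) * w i = ((s i / d i : ℝ) : ℂ) := by
    intro i
    simp only [hwdef]
    rw [← ht i]
    push_cast
    ring
  have hSsum : (S : ℂ) = ∑ i, ((s i / d i : ℝ) : ℂ) := by
    rw [hSdef]; push_cast; rfl
  have e1 : star w ⬝ᵥ ((Matrix.diagonal fun i => (a:ℂ) * X i i + (c i:ℂ) * X (σ i) (σ i)) *ᵥ w)
      = (S : ℂ) := by
    simp only [dotProduct, Matrix.mulVec_diagonal, Pi.star_apply, RCLike.star_def,
      hwdef, hXdef, Matrix.of_apply, Complex.conj_ofReal]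
    rw [hSsum]
    refine Finset.sum_congr rfl fun i _ => ?_
    have hdc : (a:ℂ) * ((t i:ℂ)*(t i:ℂ)) + (c i:ℂ)*((t (σ i):ℂ)*(t (σ i):ℂ)) = ((d i:ℝ):ℂ) := by
      simp only [hddef]
      rw [← ht i, ← ht (σ i)]
      push_cast
      ring
    rw [hdc]
    have hdi := (hd i).ne'
    rw [show ((t i / d i : ℝ):ℂ) * (((d i:ℝ):ℂ) * ((t i / d i : ℝ):ℂ))
        = ((t i / d i * (d i * (t i / d i)) : ℝ) : ℂ) from by push_cast; ring]
    congr 1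
    field_simp
    nlinarith [ht i]
  have hwconj : ∀ i, (starRingEnd ℂ) (w i) = ((t i / d i : ℝ) : ℂ) := fun i => by
    simp only [hwdef, Complex.conj_ofReal]
  have e2 : star w ⬝ᵥ (X *ᵥ w) = (S : ℂ) * (S : ℂ) := by
    simp only [dotProduct, Matrix.mulVec, Pi.star_apply, RCLike.star_def,
      hXdef, Matrix.of_apply]
    have inner : ∀ i, (∑ j, (t i:ℂ)*(t j:ℂ) * w j) = (t i:ℂ) * (S:ℂ) := by
      intro i
      rw [hSsum, Finset.mul_sum]
      exact Finset.sum_congr rfl fun j _ => by rw [← hq j]; ring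
    calc ∑ i, (starRingEnd ℂ) (w i) * ∑ j, (t i:ℂ)*(t j:ℂ) * w j
        = ∑ i, ((s i / d i : ℝ):ℂ) * (S:ℂ) := by
          refine Finset.sum_congr rfl fun i _ => ?_
          rw [inner i, hwconj i]
          have hq' : (t i:ℂ) * ((t i / d i : ℝ):ℂ) = ((s i / d i:ℝ):ℂ) := hq i
          calc ((t i / d i : ℝ):ℂ) * ((t i:ℂ) * (S:ℂ))
              = ((t i:ℂ) * ((t i / d i : ℝ):ℂ)) * (S:ℂ) := by ring
            _ = ((s i / d i:ℝ):ℂ) * (S:ℂ) := by rw [hq']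
      _ = (S:ℂ) * (S:ℂ) := by rw [← Finset.sum_mul, ← hSsum]
  have h2 := (hpos X hX).dotProduct_mulVec_nonneg w
  have hE : star w ⬝ᵥ ((ThetaMap n σ a c X) *ᵥ w) = ((S - S*S : ℝ) : ℂ) := by
    rw [ThetaMap, Matrix.sub_mulVec, dotProduct_sub, e1, e2]
    push_cast
    ring
  rw [hE] at h2
  have h3 : (0:ℝ) ≤ S - S*S := Complex.zero_le_real.mp h2
  have hSpos : 0 < S := Finset.sum_pos (fun i _ => div_pos (hs i) (hd i)) Finset.univ_nonempty
  have : S ≤ 1 := by nlinarith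
  simpa [hSdef, hddef] using this

theorem stmt9 (n : ℕ) (hn : 0 < n) (σ : Equiv.Perm (Fin n)) (hσ : σ.IsCycle)
    (hσn : σ.support.card = n) (a : ℝ) (c : Fin n → ℝ)
    (ha0 : 0 < a) (hc : ∀ i, 0 < c i)
    (hpos : ∀ X : Matrix (Fin n) (Fin n) ℂ, X.PosSemidef → (ThetaMap n σ a c X).PosSemidef) :
    max ((n : ℝ) - 1) ((n : ℝ) - (∏ i, c i) ^ ((1 : ℝ) / n)) ≤ a := by
  have hne : Nonempty (Fin n) := ⟨⟨0, hn⟩⟩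
  have key := sum_le_one n hn σ a c ha0 hc hpos
  have key2 : ∀ u : Fin n → ℝ, (∀ i, 0 < u i) → ∏ i, u i = 1 →
      ∑ i, 1 / (a + c i * u i) ≤ 1 := by
    intro u hu hu1
    obtain ⟨s, hs, hsrec⟩ := exists_cocycle n hn σ hσ hσn u hu hu1
    have hk := key s hs
    calc ∑ i, 1/(a + c i * u i) = ∑ i, s i / (a * s i + c i * s (σ i)) := by
          refine Finset.sum_congr rfl fun i _ => ?_
          rw [hsrec i]
          have h1 : 0 < a + c i * u i := by
            have := mul_pos (hc i) (hu i); linarith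
          have h2 : (s i) ≠ 0 := (hs i).ne'
          rw [show a * s i + c i * (u i * s i) = (a + c i * u i) * s i by ring]
          rw [div_mul_eq_div_div_swap, div_self h2]
      _ ≤ 1 := hk
  apply max_le
  · -- n - 1 ≤ a
    refine le_of_forall_pos_le_add ?_
    intro ε hε
    set j0 : Fin n := ⟨0, hn⟩ with hj0
    set C : ℝ := ∑ i, c i with hC
    have hCpos : 0 < C := Finset.sum_pos (fun i _ => hc i) Finset.univ_nonempty
    set x : ℝ := ε / C with hxdef
    have hx : 0 < x := div_pos hε hCpos
    set u : Fin n → ℝ := fun i => if i = j0 then x ^ ((1:ℤ) - n) else x with hu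
    have hupos : ∀ i, 0 < u i := by
      intro i
      simp only [hu]
      split
      · exact zpow_pos hx _
      · exact hx
    have huprod : ∏ i, u i = 1 := by
      rw [← Finset.mul_prod_erase Finset.univ u (Finset.mem_univ j0)]
      have h1 : ∏ i ∈ Finset.univ.erase j0, u i = x ^ (n - 1 : ℕ) := by
        have hcg : ∀ i ∈ Finset.univ.erase j0, u i = x := fun i hi => by
          simp only [hu, if_neg (Finset.ne_of_mem_erase hi)]
        rw [Finset.prod_congr rfl hcg, Finset.prod_const, Finset.card_erase_of_mem (Finset.mem_univ _),
          Finset.card_univ, Fintype.card_fin]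
      rw [h1]
      simp only [hu, if_pos rfl]
      rw [← zpow_natCast x (n-1), ← zpow_add₀ hx.ne']
      rw [show (1 - (n:ℤ)) + ((n-1:ℕ):ℤ) = 0 by omega]
      exact zpow_zero x
    have h := key2 u hupos huprod
    have hden : ∀ i, 0 < a + c i * u i := by
      intro i; have := mul_pos (hc i) (hupos i); linarith
    have hterm : ∀ i ∈ Finset.univ.erase j0, 1/(a + C * x) ≤ 1/(a + c i * u i) := by
      intro i hi
      have hne' := Finset.ne_of_mem_erase hi
      simp only [hu, if_neg hne']
      apply one_div_le_one_div_of_le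
      · have := mul_pos (hc i) hx; linarith
      · have hci : c i ≤ C := Finset.single_le_sum (fun j _ => (hc j).le) (Finset.mem_univ i)
        nlinarith
    have hsum : ((n:ℝ) - 1) * (1/(a + C*x)) ≤ ∑ i ∈ Finset.univ.erase j0, 1/(a + c i * u i) := by
      calc ((n:ℝ)-1) * (1/(a+C*x))
          = ∑ _i ∈ Finset.univ.erase j0, 1/(a+C*x) := by
            rw [Finset.sum_const, Finset.card_erase_of_mem (Finset.mem_univ _),
              Finset.card_univ, Fintype.card_fin, nsmul_eq_mul]
            congr 1
            push_cast [Nat.cast_sub hn]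
            ring
        _ ≤ _ := Finset.sum_le_sum hterm
    have hfull : ∑ i ∈ Finset.univ.erase j0, 1/(a + c i * u i) ≤ ∑ i, 1/(a + c i * u i) :=
      Finset.sum_le_sum_of_subset_of_nonneg (Finset.subset_univ _)
        (fun i _ _ => le_of_lt (one_div_pos.mpr (hden i)))
    have h1 : ((n:ℝ)-1) * (1/(a+C*x)) ≤ 1 := le_trans hsum (le_trans hfull h)
    have hpos' : 0 < a + C*x := by positivity
    rw [mul_one_div, div_le_one hpos'] at h1
    have hCx : C * x = ε := by
      rw [hxdef]; field_simp
    linarith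
  · -- n - r ≤ a
    set r : ℝ := (∏ i, c i) ^ ((1:ℝ)/n) with hr
    have hPc : 0 < ∏ i, c i := Finset.prod_pos (fun i _ => hc i)
    have hrpos : 0 < r := Real.rpow_pos_of_pos hPc _
    have hrn : r ^ n = ∏ i, c i := by
      rw [hr, ← Real.rpow_natCast ((∏ i, c i) ^ ((1:ℝ)/n)) n, ← Real.rpow_mul hPc.le]
      rw [one_div, inv_mul_cancel₀ (by exact_mod_cast hn.ne'), Real.rpow_one]
    have huprod : ∏ i, (fun i => r / c i) i = 1 := by
      simp only
      rw [Finset.prod_div_distrib, Finset.prod_const, Finset.card_univ, Fintype.card_fin, hrn]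
      exact div_self hPc.ne'
    have h := key2 (fun i => r / c i) (fun i => div_pos hrpos (hc i)) huprod
    have hsimp : ∀ i : Fin n, 1 / (a + c i * (r / c i)) = 1 / (a + r) := by
      intro i
      rw [mul_div_cancel₀ _ (hc i).ne']
    rw [Finset.sum_congr rfl (fun i _ => hsimp i), Finset.sum_const, Finset.card_univ,
      Fintype.card_fin, nsmul_eq_mul] at h
    have hpos' : 0 < a + r := by linarith
    rw [mul_one_div, div_le_one hpos'] at h
    linarith
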